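/- For all Borel sets E, D ⊆ ∂F, one has η_A((E × D) ∩ ∂²F) ≥ μ_A(E)·μ_A(D). -/

import Mathlib

open MeasureTheory Filter Topology
open scoped ENNReal NNReal

namespace FGC

noncomputable section

variable (k : ℕ)

/-- The alphabet `A = Σ ∪ Σ⁻¹`: a letter is a basis element together with a sign. -/
abbrev L := Fin k × Bool

/-- The inverse of a letter. -/
def linv (a : L k) : L k := (a.1, !a.2)

/-- A right-infinite word is (freely) reduced if no letter is followed by its inverse. -/
def Red (x : ℕ → L k) : Prop := ∀ n, x (n + 1) ≠ linv k (x n)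

/-- The boundary `∂F`: the set of infinite freely reduced words in the alphabet `A`. -/
def Boundary : Type := { x : ℕ → L k // Red k x }

instance : TopologicalSpace (Boundary k) :=
  inferInstanceAs (TopologicalSpace { x : ℕ → L k // Red k x })

instance : MeasurableSpace (Boundary k) := borel _

instance : BorelSpace (Boundary k) := ⟨rfl⟩

/-- The free group of rank `k`. -/
abbrev F := FreeGroup (Fin k)

/-- The word length `|v|` of an element of `F`. -/
def wordLength (v : F k) : ℕ := v.toWord.length

/-- The cyclically reduced length `‖v‖`: the minimal word length among conjugates of `v`. -/
def cyclLength (v : F k) : ℕ := sInf { n | ∃ g : F k, wordLength k (g * v * g⁻¹) = n }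

/-- The cylinder `Cyl v ⊆ ∂F` of rays starting with the reduced word of `v`. -/
def Cyl (v : F k) : Set (Boundary k) :=
  { x | ∀ i : Fin v.toWord.length, x.1 i = v.toWord.get i }

/-- The shift deleting the first letter of a ray. -/
def shift (x : ℕ → L k) : ℕ → L k := fun n => x (n + 1)

/-- Prepending a letter to a ray. -/
def cons (a : L k) (x : ℕ → L k) : ℕ → L k
  | 0 => a
  | n + 1 => x n

/-- Prepending a (reversed) finite word to a ray, performing free reduction. -/
def prependAux : List (L k) → (ℕ → L k) → ℕ → L k
  | [], x => x
  | a :: r, x => prependAux r (if x 0 = linv k a then shift k x else cons k a x)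

theorem red_shift {x : ℕ → L k} (hx : Red k x) : Red k (shift k x) :=
  fun n => hx (n + 1)

theorem red_cons {a : L k} {x : ℕ → L k} (hx : Red k x) (h : x 0 ≠ linv k a) :
    Red k (cons k a x) := by
  intro n
  cases n with
  | zero => exact h
  | succ m => exact hx m

theorem red_prependAux : ∀ (r : List (L k)) {x : ℕ → L k}, Red k x → Red k (prependAux k r x)
  | [], _, hx => hx
  | a :: r, x, hx => by
    by_cases h : x 0 = linv k a
    · simp only [prependAux, if_pos h]
      exact red_prependAux r (red_shift k hx)
    · simp only [prependAux, if_neg h]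
      exact red_prependAux r (red_cons k hx h)

/-- The left-translation action of `F` on `∂F`: concatenate and freely reduce. -/
def act (g : F k) (x : Boundary k) : Boundary k :=
  ⟨prependAux k g.toWord.reverse x.1, red_prependAux k _ x.2⟩

/-- The shift map `T : ∂F → ∂F`. -/
def Tmap (x : Boundary k) : Boundary k := ⟨shift k x.1, red_shift k x.2⟩

/-- The double boundary `∂²F`, as the complement of the diagonal. -/
def D2 : Set (Boundary k × Boundary k) := { p | p.1 ≠ p.2 }

/-- The diagonal action of `F` on `∂F × ∂F`. -/
def actPair (g : F k) (p : Boundary k × Boundary k) : Boundary k × Boundary k :=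
  (act k g p.1, act k g p.2)

/-- The cylinder `Cyl[1,w]` of geodesics through the segment from `1` to `w`. -/
def baseCyl (w : F k) : Set (Boundary k × Boundary k) :=
  { p | p.1.1 0 ≠ p.2.1 0 ∧ p.2 ∈ Cyl k w }

/-- The base-ball `B = Cyl[1,1]` of geodesics through the base point. -/
def baseBall : Set (Boundary k × Boundary k) := baseCyl k 1

/-- The cylinder `Cyl[x,y] = x · Cyl[1, x⁻¹y]`. -/
def Cyl2 (x y : F k) : Set (Boundary k × Boundary k) :=
  actPair k x '' baseCyl k (x⁻¹ * y)

/-- A geodesic current: a Borel measure on `∂F × ∂F` giving no mass to the diagonal,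
invariant under the diagonal `F`-action, and finite on compact subsets of `∂²F`. -/
def IsCurrent (η : Measure (Boundary k × Boundary k)) : Prop :=
  η { p | p.1 = p.2 } = 0 ∧
  (∀ g : F k, ∀ W : Set (Boundary k × Boundary k), MeasurableSet W →
    η (actPair k g ⁻¹' W) = η W) ∧
  (∀ K : Set (Boundary k × Boundary k), K ⊆ D2 k → IsCompact K → η K < ⊤)

/-- The element of `F` given by the first `n` letters of a ray. -/
def prefixEl (x : Boundary k) (n : ℕ) : F k :=
  FreeGroup.mk (List.ofFn fun i : Fin n => x.1 i)

/-- `b : ∂F → ∂F` is the boundary extension of the automorphism `Φ`: for every ray `x`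
and every `m`, the length-`m` prefix of `b x` is the length-`m` prefix of the reduced
word of `Φ (x|_n)` for all sufficiently large `n`. -/
def IsBdryExt (Φ : F k ≃* F k) (b : Boundary k → Boundary k) : Prop :=
  ∀ x : Boundary k, ∀ m : ℕ, ∃ N : ℕ, ∀ n ≥ N,
    (Φ (prefixEl k x n)).toWord.take m = List.ofFn fun i : Fin m => (b x).1 i

/-- The map `∂Φ × ∂Φ` on pairs. -/
def pairMap (b : Boundary k → Boundary k) (p : Boundary k × Boundary k) :
    Boundary k × Boundary k := (b p.1, b p.2)

/-- The length of an automorphism with boundary map `b`, w.r.t. the current `η`: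
`L(Φ) = η((∂Φ × ∂Φ)⁻¹ B)`. -/
def autLen (η : Measure (Boundary k × Boundary k)) (b : Boundary k → Boundary k) : ℝ≥0∞ :=
  η (pairMap k b ⁻¹' baseBall k)

/-- The subgroup of inner automorphisms. -/
abbrev Inn : Subgroup (MulAut (F k)) := (MulAut.conj : F k →* MulAut (F k)).range

/-- `Out(F) = Aut(F)/Inn(F)` as a coset space. -/
abbrev OutQ := MulAut (F k) ⧸ Inn k

/-- A simple automorphism: induced by a permutation of the basis, or inner. -/
def SimpleAut (Φ : MulAut (F k)) : Prop :=
  (∃ σ : Equiv.Perm (Fin k), ∀ i, Φ (FreeGroup.of i) = FreeGroup.of (σ i)) ∨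
  (∃ v : F k, ∀ x, Φ x = v * x * v⁻¹)

/-- A Whitehead automorphism of the second kind. -/
def Whitehead2 (τ : MulAut (F k)) : Prop :=
  ∃ a : Fin k, ∀ i : Fin k,
    τ (FreeGroup.of i) = FreeGroup.of i ∨
    τ (FreeGroup.of i) = FreeGroup.of i * FreeGroup.of a ∨
    τ (FreeGroup.of i) = (FreeGroup.of a)⁻¹ * FreeGroup.of i ∨
    τ (FreeGroup.of i) = (FreeGroup.of a)⁻¹ * FreeGroup.of i * FreeGroup.of a

/-- The space of frequency measures: finite `T`-invariant Borel measures on `∂F`. -/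
def FreqM : Type :=
  { μ : Measure (Boundary k) //
    IsFiniteMeasure μ ∧ ∀ W : Set (Boundary k), MeasurableSet W → μ (Tmap k ⁻¹' W) = μ W }

/-- The space of geodesic currents. -/
def Currents : Type := { η : Measure (Boundary k × Boundary k) // IsCurrent k η }

/-- Continuous functions on `∂F × ∂F` with compact support contained in `∂²F`;
these are the test functions for the weak-* topology on currents. -/
def TestF : Type :=
  { φ : Boundary k × Boundary k → ℝ //
    Continuous φ ∧ IsCompact (tsupport φ) ∧ tsupport φ ⊆ D2 k }

/-- The weak-* topology on frequency measures. -/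
instance : TopologicalSpace (FreqM k) :=
  ⨅ φ : C(Boundary k, ℝ),
    TopologicalSpace.induced (fun μ : FreqM k => ∫ x, φ x ∂μ.1) inferInstance

/-- The weak-* topology on geodesic currents. -/
instance : TopologicalSpace (Currents k) :=
  ⨅ φ : TestF k,
    TopologicalSpace.induced (fun η : Currents k => ∫ p, φ.1 p ∂η.1) inferInstance

/-- Convergence of a sequence of group elements (as reduced words) to a boundary ray. -/
def WordTendsto (pn : ℕ → F k) (p : Boundary k) : Prop :=
  ∀ m : ℕ, ∃ N : ℕ, ∀ n ≥ N, (pn n).toWord.take m = List.ofFn fun i : Fin m => p.1 i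

/-- The length of the maximal common initial segment of two rays. -/
def commonLen (p : Boundary k × Boundary k) : ℕ :=
  sSup { m : ℕ | ∀ i < m, p.1.1 i = p.2.1 i }

/-- A single letter as an element of `F`. -/
def el (a : L k) : F k := FreeGroup.mk [a]

/-- The product of per-letter constants over the reduced word of `w`. -/
def Cprod (C : L k → ℝ≥0) (w : F k) : ℝ≥0 := (w.toWord.map C).prod

section Aux1
variable (k : ℕ)

@[simp] theorem linv_linv (a : L k) : linv k (linv k a) = a := by
  simp [linv]

/-- A finite word is reduced. -/
def RedL (l : List (L k)) : Prop := l.Chain' fun p q => q ≠ linv k p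

theorem redL_nil : RedL k ([] : List (L k)) := List.isChain_nil

theorem redL_ofFn (x : ℕ → L k) (hx : Red k x) (n : ℕ) :
    RedL k (List.ofFn fun i : Fin n => x i) := by
  rw [RedL, List.Chain', List.isChain_iff_getElem]
  intro i h
  simp only [List.length_ofFn] at h
  simp only [List.getElem_ofFn]
  exact hx i

/-- Prepend a finite word to a ray, without reduction. -/
def ray (l : List (L k)) (x : ℕ → L k) : ℕ → L k := fun n =>
  if h : n < l.length then l[n] else x (n - l.length)

theorem ray_nil (x : ℕ → L k) : ray k [] x = x := by
  funext n; simp [ray]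

theorem ray_lt {l : List (L k)} {x : ℕ → L k} {n : ℕ} (h : n < l.length) :
    ray k l x n = l[n] := dif_pos h

theorem ray_ge {l : List (L k)} {x : ℕ → L k} {n : ℕ} (h : l.length ≤ n) :
    ray k l x n = x (n - l.length) := dif_neg (by omega)

theorem ray_cons (a : L k) (m : List (L k)) (x : ℕ → L k) :
    ray k (a :: m) x = cons k a (ray k m x) := by
  funext n
  cases n with
  | zero => simp [ray, cons]
  | succ n =>
    show ray k (a :: m) x (n+1) = ray k m x n
    by_cases h : n < m.length
    · have h' : n + 1 < (a :: m).length := by simp only [List.length_cons]; omega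
      rw [ray_lt k h', ray_lt k h]
      simp
    · have h' : (a :: m).length ≤ n + 1 := by simp only [List.length_cons]; omega
      rw [ray_ge k h', ray_ge k (by omega : m.length ≤ n)]
      simp [Nat.succ_sub_succ]

theorem ray_append (m m' : List (L k)) (x : ℕ → L k) :
    ray k (m ++ m') x = ray k m (ray k m' x) := by
  induction m with
  | nil => simp [ray_nil]
  | cons a t ih => simp [List.cons_append, ray_cons, ih]

theorem shift_cons (a : L k) (x : ℕ → L k) : shift k (cons k a x) = x := by
  funext n; rfl

theorem cons_zero (a : L k) (x : ℕ → L k) : cons k a x 0 = a := rfl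

theorem prependAux_nil (x : ℕ → L k) : prependAux k [] x = x := rfl

theorem prependAux_cons (a : L k) (r : List (L k)) (x : ℕ → L k) :
    prependAux k (a :: r) x =
      prependAux k r (if x 0 = linv k a then shift k x else cons k a x) := rfl

theorem prependAux_append (r s : List (L k)) (x : ℕ → L k) :
    prependAux k (r ++ s) x = prependAux k s (prependAux k r x) := by
  induction r generalizing x with
  | nil => rfl
  | cons a r ih => rw [List.cons_append, prependAux_cons, prependAux_cons, ih]

theorem prependAux_noCancel :
    ∀ (r : List (L k)) (x : ℕ → L k), (List.Chain' (fun p q => p ≠ linv k q) r) →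
      (∀ a ∈ r.head?, x 0 ≠ linv k a) → prependAux k r x = ray k r.reverse x
  | [], x, _, _ => by simp [prependAux_nil, ray_nil]
  | a :: r, x, hch, hhd => by
    have hx : x 0 ≠ linv k a := hhd a rfl
    obtain ⟨h1, h2⟩ := List.isChain_cons.mp hch
    rw [prependAux_cons, if_neg hx,
      prependAux_noCancel r (cons k a x) h2 (by
        intro b hb
        rw [cons_zero]
        exact h1 b hb),
      List.reverse_cons, ray_append, ray_cons, ray_nil]

theorem prependAux_cancel :
    ∀ (r : List (L k)) (y : ℕ → L k), prependAux k r (ray k (r.map (linv k)) y) = y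
  | [], y => by simp [prependAux_nil, ray_nil]
  | a :: r, y => by
    rw [List.map_cons, ray_cons, prependAux_cons, if_pos (cons_zero k _ _), shift_cons]
    exact prependAux_cancel r y

theorem red_ray {l : List (L k)} {x : ℕ → L k} (hl : RedL k l) (hx : Red k x)
    (hj : ∀ a ∈ l.getLast?, x 0 ≠ linv k a) : Red k (ray k l x) := by
  induction l with
  | nil => rw [ray_nil]; exact hx
  | cons a m ih =>
    obtain ⟨h1, h2⟩ := List.isChain_cons.mp hl
    rw [ray_cons]
    refine red_cons k ?_ ?_
    · refine ih h2 ?_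
      intro b hb
      apply hj
      cases m with
      | nil => simp at hb
      | cons c m' => rw [List.getLast?_cons_cons]; exact hb
    · cases m with
      | nil => rw [ray_nil]; exact hj a (by simp)
      | cons c m' =>
        rw [ray_cons]
        exact fun h => h1 c rfl h

/-- Delete the first `n` letters of a ray. -/
def shiftN (n : ℕ) (x : ℕ → L k) : ℕ → L k := fun i => x (n + i)

theorem red_shiftN (n : ℕ) {x : ℕ → L k} (hx : Red k x) : Red k (shiftN k n x) := by
  intro i
  show x (n + (i + 1)) ≠ linv k (x (n + i))
  rw [Nat.add_succ]
  exact hx (n + i)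

theorem shiftN_zero' (n : ℕ) (x : ℕ → L k) : shiftN k n x 0 = x n := by simp [shiftN]

theorem ray_shiftN_eq {l : List (L k)} {x : ℕ → L k}
    (h : ∀ (i : ℕ) (hi : i < l.length), x i = l[i]) :
    ray k l (shiftN k l.length x) = x := by
  funext n
  by_cases hn : n < l.length
  · rw [ray_lt k hn]; exact (h n hn).symm
  · rw [ray_ge k (by omega)]
    show x (l.length + (n - l.length)) = x n
    congr 1
    omega

end Aux1

section Aux2
variable (k : ℕ)

theorem reduce_eq_self {l : List (L k)} (hl : RedL k l) : FreeGroup.reduce l = l := by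
  induction l with
  | nil => rfl
  | cons a m ih =>
    obtain ⟨h1, h2⟩ := List.isChain_cons.mp hl
    rw [FreeGroup.reduce.cons, ih h2]
    cases m with
    | nil => rfl
    | cons c m' =>
      have hne : ¬(a.1 = c.1 ∧ a.2 = !c.2) := by
        rintro ⟨e1, e2⟩
        refine h1 c rfl (Prod.ext e1.symm ?_)
        show c.2 = (a.1, !a.2).2
        rw [e2, Bool.not_not]
      simp [hne]

theorem toWord_mk_of_redL {l : List (L k)} (hl : RedL k l) :
    (FreeGroup.mk l).toWord = l := by
  rw [FreeGroup.toWord_mk, reduce_eq_self k hl]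

theorem mk_ne_one_of_redL {l : List (L k)} (hl : RedL k l) (hne : l ≠ []) :
    FreeGroup.mk l ≠ 1 := by
  intro h
  apply hne
  rw [← toWord_mk_of_redL k hl, h, FreeGroup.toWord_one]

theorem wordLength_mk_of_redL {l : List (L k)} (hl : RedL k l) :
    wordLength k (FreeGroup.mk l) = l.length := by
  rw [wordLength, toWord_mk_of_redL k hl]

/-- Cylinder given by a finite word. -/
def CylL (l : List (L k)) : Set (Boundary k) :=
  { x | ∀ (i : ℕ) (hi : i < l.length), x.1 i = l[i] }

theorem mem_Cyl_iff (v : F k) (x : Boundary k) :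
    x ∈ Cyl k v ↔ ∀ (i : ℕ) (hi : i < v.toWord.length), x.1 i = v.toWord[i] :=
  ⟨fun h i hi => by simpa using h ⟨i, hi⟩, fun h i => by simpa using h i i.2⟩

theorem Cyl_mk_eq_CylL {l : List (L k)} (hl : RedL k l) :
    Cyl k (FreeGroup.mk l) = CylL k l := by
  have ht := toWord_mk_of_redL k hl
  ext x
  rw [mem_Cyl_iff]
  simp only [ht]
  rfl

theorem CylL_nil : CylL k ([] : List (L k)) = Set.univ := by
  ext x; simp [CylL]

theorem prefix_of_agree {l m : List (L k)} (hlen : l.length ≤ m.length)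
    (h : ∀ (i : ℕ) (hi : i < l.length), l[i] = m[i]'(lt_of_lt_of_le hi hlen)) :
    l <+: m := by
  rw [List.prefix_iff_eq_take]
  apply List.ext_get (by rw [List.length_take]; omega)
  intro n h1 h2
  simp only [List.get_eq_getElem, List.getElem_take]
  exact h n h1

theorem CylL_subset_of_prefix {l m : List (L k)} (h : l <+: m) :
    CylL k m ⊆ CylL k l := by
  intro x hx i hi
  rw [h.getElem hi]
  exact hx i (lt_of_lt_of_le hi h.length_le)

theorem CylL_disjoint {l m : List (L k)} (hl : ¬ l <+: m) (hm : ¬ m <+: l) :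
    CylL k l ∩ CylL k m = ∅ := by
  rw [Set.eq_empty_iff_forall_notMem]
  rintro x ⟨hxl, hxm⟩
  rcases le_total l.length m.length with hle | hle
  · exact hl (prefix_of_agree k hle (fun i hi => by
      rw [← hxl i hi, ← hxm i (lt_of_lt_of_le hi hle)]))
  · exact hm (prefix_of_agree k hle (fun i hi => by
      rw [← hxm i hi, ← hxl i (lt_of_lt_of_le hi hle)]))

theorem mem_CylL_ofFn (x : Boundary k) (n : ℕ) :
    x ∈ CylL k (List.ofFn fun i : Fin n => x.1 i) := by
  intro i hi
  simp only [List.length_ofFn] at hi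
  simp [List.getElem_ofFn]

end Aux2

section Aux3
variable (k : ℕ)

theorem redL_invRev {m : List (L k)} (hm : RedL k m) :
    RedL k ((m.map (linv k)).reverse) := by
  rw [RedL, List.Chain', List.isChain_reverse, List.isChain_map]
  refine List.IsChain.imp ?_ hm
  intro p q h
  show linv k p ≠ linv k (linv k q)
  rw [linv_linv]
  exact h.symm

theorem redL_append_left {l m : List (L k)} (h : RedL k (l ++ m)) : RedL k l :=
  (List.isChain_append.mp h).1

theorem redL_append_right {l m : List (L k)} (h : RedL k (l ++ m)) : RedL k m :=
  (List.isChain_append.mp h).2.1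

theorem redL_junction {l : List (L k)} {c : L k} {m : List (L k)}
    (h : RedL k (l ++ c :: m)) : ∀ x ∈ l.getLast?, c ≠ linv k x :=
  fun x hx => (List.isChain_append.mp h).2.2 x hx c rfl

/-- The inverse word. -/
def invW (m : List (L k)) : List (L k) := (m.map (linv k)).reverse

theorem invW_length (m : List (L k)) : (invW k m).length = m.length := by
  simp [invW]

theorem invW_eq_invRev (m : List (L k)) : invW k m = FreeGroup.invRev m := by
  simp [invW, FreeGroup.invRev, linv]

theorem invW_getElem (m : List (L k)) (i : ℕ) (hi : i < (invW k m).length) :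
    (invW k m)[i] = linv k (m[m.length - 1 - i]'(by
      rw [invW_length] at hi; omega)) := by
  simp only [invW, List.getElem_reverse, List.getElem_map, List.length_map]

theorem redL_invW {m : List (L k)} (hm : RedL k m) : RedL k (invW k m) :=
  redL_invRev k hm

theorem invW_getLast? (x : L k) (m : List (L k)) :
    (invW k (x :: m)).getLast? = some (linv k x) := by
  rw [invW, List.getLast?_reverse]
  rfl

theorem invW_head (x : L k) (m : List (L k)) (h : 0 < (invW k (x :: m)).length) :
    (invW k (x :: m))[0] =
      linv k ((x :: m).getLast (List.cons_ne_nil x m)) := by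
  rw [invW_getElem, List.getLast_eq_getElem]
  norm_num

section Words
variable {v u₁ w₁ : List (L k)} {a b : L k}

theorem redL_Z (HU : RedL k (v ++ a :: u₁)) (HW : RedL k (v ++ b :: w₁)) (hab : a ≠ b) :
    RedL k (invW k (a :: u₁) ++ b :: w₁) := by
  rw [RedL, List.Chain', List.isChain_append]
  refine ⟨redL_invW k (redL_append_right k HU), redL_append_right k HW, ?_⟩
  intro x hx y hy
  rw [invW_getLast? k a u₁] at hx
  cases hx
  cases hy
  rw [linv_linv]
  exact hab.symm

theorem Z_length : (invW k (a :: u₁) ++ b :: w₁).length = u₁.length + w₁.length + 2 := by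
  simp [invW]
  omega


theorem mk_inv_mul :
    (FreeGroup.mk (v ++ a :: u₁))⁻¹ * FreeGroup.mk (v ++ b :: w₁) =
      FreeGroup.mk (invW k (a :: u₁) ++ b :: w₁) := by
  rw [← FreeGroup.mul_mk, ← FreeGroup.mul_mk (L₁ := v), ← FreeGroup.mul_mk (L₁ := invW k (a :: u₁)),
    invW_eq_invRev, ← FreeGroup.inv_mk]
  group

end Words
end Aux3

section Aux4
variable (k : ℕ)

theorem shiftN_apply (n : ℕ) (x : ℕ → L k) (i : ℕ) : shiftN k n x i = x (n + i) := rfl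

theorem act_eq_ray {l : List (L k)} (hl : RedL k l) (x : Boundary k)
    (hx : ∀ c ∈ l.getLast?, x.1 0 ≠ linv k c) :
    (act k (FreeGroup.mk l) x).1 = ray k l x.1 := by
  show prependAux k (FreeGroup.mk l).toWord.reverse x.1 = _
  rw [toWord_mk_of_redL k hl,
    prependAux_noCancel k l.reverse x.1 (List.isChain_reverse.mpr hl)
      (fun c hc => hx c (by rwa [List.head?_reverse] at hc)),
    List.reverse_reverse]

theorem act_cancel {vv m : List (L k)} (hv : RedL k vv) (hl : RedL k (vv ++ m))
    (y : ℕ → L k) (hy : ∀ c ∈ vv.getLast?, y 0 ≠ linv k c)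
    (x : Boundary k) (hx : x.1 = ray k (invW k m) y) :
    (act k (FreeGroup.mk (vv ++ m)) x).1 = ray k vv y := by
  show prependAux k (FreeGroup.mk (vv ++ m)).toWord.reverse x.1 = _
  have h1 : ray k (invW k m) y = ray k (m.reverse.map (linv k)) y := by
    rw [invW, List.map_reverse]
  rw [toWord_mk_of_redL k hl, List.reverse_append, prependAux_append, hx, h1,
    prependAux_cancel,
    prependAux_noCancel k vv.reverse y (List.isChain_reverse.mpr hv)
      (fun c hc => hy c (by rwa [List.head?_reverse] at hc)),
    List.reverse_reverse]

theorem getLast?_append_cons (v : List (L k)) (a : L k) (u : List (L k)) :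
    (v ++ a :: u).getLast? = some ((a :: u).getLast (List.cons_ne_nil a u)) := by
  rw [List.getLast?_append, List.getLast?_eq_getLast (List.cons_ne_nil a u)]
  rfl

theorem getElem_last_append (v u : List (L k)) (aa : L k) (i : ℕ)
    (hi : i = v.length + u.length) (h : i < (v ++ aa :: u).length) :
    (v ++ aa :: u)[i] = (aa :: u).getLast (List.cons_ne_nil aa u) := by
  subst hi
  rw [List.getElem_append_right (by omega), List.getLast_eq_getElem]
  congr 1
  simp

theorem getElem_append_cons_right (v u : List (L k)) (aa : L k) (i j : ℕ)
    (hij : i = v.length + j) (hju : j < u.length + 1)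
    (h : i < (v ++ aa :: u).length) :
    (v ++ aa :: u)[i] = (aa :: u)[j]'(by simpa using hju) := by
  subst hij
  rw [List.getElem_append_right (by omega)]
  congr 1
  omega

theorem cyl2_eq {v u₁ w₁ : List (L k)} {a b : L k} (hab : a ≠ b)
    (HU : RedL k (v ++ a :: u₁)) (HW : RedL k (v ++ b :: w₁)) :
    Cyl2 k (FreeGroup.mk (v ++ a :: u₁)) (FreeGroup.mk (v ++ b :: w₁)) =
      CylL k (v ++ a :: u₁) ×ˢ CylL k (v ++ b :: w₁) := by
  have hZred : RedL k (invW k (a :: u₁) ++ b :: w₁) := redL_Z k HU HW hab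
  have hM : (invW k (a :: u₁)).length = u₁.length + 1 := by rw [invW_length]; rfl
  have hUlen : (v ++ a :: u₁).length = v.length + u₁.length + 1 := by simp; omega
  have hWlen : (v ++ b :: w₁).length = v.length + w₁.length + 1 := by simp; omega
  have hZlen : (invW k (a :: u₁) ++ b :: w₁).length
      = (invW k (a :: u₁)).length + w₁.length + 1 := by simp; omega
  apply Set.Subset.antisymm
  · -- forward inclusion
    rintro y ⟨⟨p, q⟩, ⟨hne, hq⟩, rfl⟩
    rw [mk_inv_mul k, Cyl_mk_eq_CylL k hZred] at hq
    have hq0 : q.1 0 = linv k ((a :: u₁).getLast (List.cons_ne_nil a u₁)) := by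
      rw [hq 0 (by omega), List.getElem_append_left (by omega), invW_head]
    constructor
    · -- first component
      show act k (FreeGroup.mk (v ++ a :: u₁)) p ∈ CylL k (v ++ a :: u₁)
      have hact := act_eq_ray k HU p (by
        rw [getLast?_append_cons]
        rintro c ⟨rfl⟩
        rw [← hq0]
        exact hne)
      intro i hi
      rw [hact, ray_lt k hi]
    · -- second component
      show act k (FreeGroup.mk (v ++ a :: u₁)) q ∈ CylL k (v ++ b :: w₁)
      have hqray : ray k (invW k (a :: u₁))
          (shiftN k (invW k (a :: u₁)).length q.1) = q.1 := by
        apply ray_shiftN_eq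
        intro i hi
        rw [hq i (by omega), List.getElem_append_left hi]
      have hy0 : shiftN k (invW k (a :: u₁)).length q.1 0 = b := by
        rw [shiftN_apply, Nat.add_zero, hq (invW k (a :: u₁)).length (by omega),
          getElem_append_cons_right k _ _ _ _ 0 (by omega) (by omega),
          List.getElem_cons_zero]
      have hcan := act_cancel k (redL_append_left k HU) HU
        (shiftN k (invW k (a :: u₁)).length q.1)
        (by
          intro c hc
          rw [hy0]
          exact redL_junction k HW c hc)
        q hqray.symm
      intro i hi
      rw [hcan]
      by_cases hiv : i < v.length
      · rw [ray_lt k hiv, List.getElem_append_left hiv]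
      · rw [ray_ge k (by omega), shiftN_apply,
          hq ((invW k (a :: u₁)).length + (i - v.length)) (by omega),
          getElem_append_cons_right k _ _ _ _ (i - v.length) rfl (by omega),
          getElem_append_cons_right k v w₁ b i (i - v.length) (by omega) (by omega)]
  · -- backward inclusion
    rintro ⟨P, Q⟩ ⟨hP, hQ⟩
    have hPlast : P.1 (v ++ a :: u₁).length
        ≠ linv k ((a :: u₁).getLast (List.cons_ne_nil a u₁)) := by
      have hP2 := P.2 ((v ++ a :: u₁).length - 1)
      rw [show (v ++ a :: u₁).length - 1 + 1 = (v ++ a :: u₁).length by omega] at hP2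
      rw [hP ((v ++ a :: u₁).length - 1) (by omega),
        getElem_last_append k v u₁ a _ (by omega)] at hP2
      exact hP2
    have hQb : Q.1 v.length = b := by
      rw [hQ v.length (by omega),
        getElem_append_cons_right k v w₁ b v.length 0 (by omega) (by omega),
        List.getElem_cons_zero]
    have hqred : Red k (ray k (invW k (a :: u₁)) (shiftN k v.length Q.1)) := by
      refine red_ray k (redL_invW k (redL_append_right k HU)) (red_shiftN k _ Q.2) ?_
      intro c hc
      rw [invW_getLast? k a u₁] at hc
      cases hc
      rw [shiftN_apply, Nat.add_zero, hQb, linv_linv]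
      exact hab.symm
    refine ⟨(⟨shiftN k (v ++ a :: u₁).length P.1, red_shiftN k _ P.2⟩,
      ⟨ray k (invW k (a :: u₁)) (shiftN k v.length Q.1), hqred⟩), ⟨?_, ?_⟩, ?_⟩
    · -- distinct first letters
      show shiftN k (v ++ a :: u₁).length P.1 0
        ≠ ray k (invW k (a :: u₁)) (shiftN k v.length Q.1) 0
      rw [shiftN_apply, Nat.add_zero, ray_lt k (by omega), invW_head]
      exact hPlast
    · -- q starts with Z
      rw [mk_inv_mul k, Cyl_mk_eq_CylL k hZred]
      intro i hi
      show ray k (invW k (a :: u₁)) (shiftN k v.length Q.1) i = _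
      by_cases hiM : i < (invW k (a :: u₁)).length
      · rw [ray_lt k hiM, List.getElem_append_left hiM]
      · rw [ray_ge k (by omega), shiftN_apply,
          hQ (v.length + (i - (invW k (a :: u₁)).length)) (by omega),
          getElem_append_cons_right k v w₁ b _ (i - (invW k (a :: u₁)).length) rfl (by omega),
          getElem_append_cons_right k (invW k (a :: u₁)) w₁ b i
            (i - (invW k (a :: u₁)).length) (by omega) (by omega)]
    · -- the action maps back to (P, Q)
      have hfst : act k (FreeGroup.mk (v ++ a :: u₁))
          ⟨shiftN k (v ++ a :: u₁).length P.1, red_shiftN k _ P.2⟩ = P := by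
        apply Subtype.ext
        rw [act_eq_ray k HU ⟨shiftN k (v ++ a :: u₁).length P.1, red_shiftN k _ P.2⟩ (by
          rw [getLast?_append_cons]
          rintro c ⟨rfl⟩
          show shiftN k (v ++ a :: u₁).length P.1 0 ≠ _
          rw [shiftN_apply, Nat.add_zero]
          exact hPlast)]
        exact ray_shiftN_eq k hP
      have hsnd : act k (FreeGroup.mk (v ++ a :: u₁))
          ⟨ray k (invW k (a :: u₁)) (shiftN k v.length Q.1), hqred⟩ = Q := by
        apply Subtype.ext
        rw [act_cancel k (redL_append_left k HU) HU (shiftN k v.length Q.1)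
          (by
            intro c hc
            rw [shiftN_apply, Nat.add_zero, hQb]
            exact redL_junction k HW c hc)
          ⟨ray k (invW k (a :: u₁)) (shiftN k v.length Q.1), hqred⟩ rfl]
        apply ray_shiftN_eq
        intro i hi
        rw [hQ i (by omega), List.getElem_append_left hi]
      show (act k (FreeGroup.mk (v ++ a :: u₁)) _, act k (FreeGroup.mk (v ++ a :: u₁)) _) = (P, Q)
      rw [hfst, hsnd]

end Aux4

section Aux5
variable (k : ℕ)

/-- Index of pieces of the double boundary. -/
def Idx : Type :=
  { t : List (L k) × L k × L k //
    RedL k (t.1 ++ [t.2.1]) ∧ RedL k (t.1 ++ [t.2.2]) ∧ t.2.1 ≠ t.2.2 }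

instance : Countable (Idx k) := by
  unfold Idx
  infer_instance

/-- The piece of `∂²F` indexed by `t`. -/
def pieceS (t : Idx k) : Set (Boundary k × Boundary k) :=
  CylL k (t.1.1 ++ [t.1.2.1]) ×ˢ CylL k (t.1.1 ++ [t.1.2.2])

theorem mem_CylL_snoc {x : Boundary k} {v : List (L k)} {c : L k}
    (h : x ∈ CylL k (v ++ [c])) :
    (∀ (i : ℕ) (hi : i < v.length), x.1 i = v[i]) ∧ x.1 v.length = c := by
  constructor
  · intro i hi
    rw [h i (by simp; omega), List.getElem_append_left hi]
  · rw [h v.length (by simp),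
      getElem_append_cons_right k v [] c v.length 0 (by omega) (by omega),
      List.getElem_cons_zero]

theorem pieceS_subset_D2 (t : Idx k) : pieceS k t ⊆ D2 k := by
  rintro ⟨P, Q⟩ ⟨hP, hQ⟩
  have h1 := (mem_CylL_snoc k hP).2
  have h2 := (mem_CylL_snoc k hQ).2
  intro hPQ
  apply t.2.2.2
  rw [← h1, ← h2, show P = Q from hPQ]

theorem ofFn_snoc_eq (x : ℕ → L k) (n : ℕ) :
    (List.ofFn fun i : Fin (n + 1) => x i) = (List.ofFn fun i : Fin n => x i) ++ [x n] := by
  rw [List.ofFn_succ', List.concat_eq_append]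
  simp

theorem pieceS_cover : (⋃ t, pieceS k t) = D2 k := by
  apply Set.Subset.antisymm
  · exact Set.iUnion_subset fun t => pieceS_subset_D2 k t
  · rintro ⟨P, Q⟩ hPQ
    have hne : P.1 ≠ Q.1 := fun h => hPQ (Subtype.ext h)
    have hex : ∃ n, P.1 n ≠ Q.1 n := by
      by_contra h
      push_neg at h
      exact hne (funext h)
    let n₀ := Nat.find hex
    have hfind : P.1 n₀ ≠ Q.1 n₀ := Nat.find_spec hex
    have hagree : ∀ i < n₀, P.1 i = Q.1 i := fun i hi =>
      of_not_not (Nat.find_min hex hi)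
    have hPofn : (List.ofFn fun i : Fin n₀ => P.1 i) ++ [P.1 n₀]
        = List.ofFn fun i : Fin (n₀ + 1) => P.1 i := (ofFn_snoc_eq k P.1 n₀).symm
    have hQofn : (List.ofFn fun i : Fin n₀ => P.1 i) ++ [Q.1 n₀]
        = List.ofFn fun i : Fin (n₀ + 1) => Q.1 i := by
      rw [ofFn_snoc_eq k Q.1 n₀]
      congr 1
      rw [List.ofFn_inj]
      funext i
      exact hagree i i.2
    refine Set.mem_iUnion.mpr ⟨⟨((List.ofFn fun i : Fin n₀ => P.1 i), P.1 n₀, Q.1 n₀),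
      ?_, ?_, hfind⟩, ?_, ?_⟩
    · rw [hPofn]; exact redL_ofFn k P.1 P.2 (n₀ + 1)
    · rw [hQofn]; exact redL_ofFn k Q.1 Q.2 (n₀ + 1)
    · show P ∈ CylL k _
      rw [hPofn]
      exact mem_CylL_ofFn k P (n₀ + 1)
    · show Q ∈ CylL k _
      rw [hQofn]
      exact mem_CylL_ofFn k Q (n₀ + 1)

theorem pieceS_eq_of_le (t t' : Idx k) {P Q : Boundary k × Boundary k}
    (hPQ : P = Q) (h : Q ∈ pieceS k t) (h' : Q ∈ pieceS k t')
    (hle : t.1.1.length ≤ t'.1.1.length) : t = t' := by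
  subst hPQ
  obtain ⟨hP, hQ⟩ := h
  obtain ⟨hP', hQ'⟩ := h'
  obtain ⟨hPv, hPa⟩ := mem_CylL_snoc k hP
  obtain ⟨hQv, hQb⟩ := mem_CylL_snoc k hQ
  obtain ⟨hPv', hPa'⟩ := mem_CylL_snoc k hP'
  obtain ⟨hQv', hQb'⟩ := mem_CylL_snoc k hQ'
  have heq : t.1.1.length = t'.1.1.length := by
    rcases lt_or_eq_of_le hle with hlt | heq
    · exfalso
      apply t.2.2.2
      rw [← hPa, ← hQb, hPv' _ hlt, hQv' _ hlt]
    · exact heq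
  have hv : t.1.1 = t'.1.1 := by
    apply List.ext_get heq
    intro i h1 h2
    simp only [List.get_eq_getElem]
    rw [← hPv i h1, hPv' i h2]
  have ha : t.1.2.1 = t'.1.2.1 := by rw [← hPa, ← hPa', heq]
  have hb : t.1.2.2 = t'.1.2.2 := by rw [← hQb, ← hQb', heq]
  apply Subtype.ext
  exact Prod.ext hv (Prod.ext ha hb)

theorem pieceS_disjoint : Pairwise (Function.onFun Disjoint (pieceS k)) := by
  intro t t' hne
  rw [Function.onFun, Set.disjoint_left]
  intro p hp hp'
  apply hne
  rcases le_total t.1.1.length t'.1.1.length with hle | hle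
  · exact pieceS_eq_of_le k t t' rfl hp hp' hle
  · exact (pieceS_eq_of_le k t' t rfl hp' hp hle).symm

end Aux5

section Aux6
variable (k : ℕ)

instance : SecondCountableTopology (Boundary k) := by
  unfold Boundary
  exact (Topology.IsEmbedding.subtypeVal (p := Red k)).secondCountableTopology

instance : T2Space (Boundary k) :=
  inferInstanceAs (T2Space { x : ℕ → L k // Red k x })

theorem isOpen_CylL (l : List (L k)) : IsOpen (CylL k l) := by
  have : CylL k l = ⋂ i : Fin l.length, { x : Boundary k | x.1 i = l[i] } := by
    ext x
    simp only [Set.mem_iInter, Set.mem_setOf_eq]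
    exact ⟨fun h i => h i i.2, fun h i hi => h ⟨i, hi⟩⟩
  rw [this]
  apply isOpen_iInter_of_finite
  intro i
  exact IsOpen.preimage (f := fun x : Boundary k => x.1 (i : ℕ))
    (Continuous.comp (continuous_apply (A := fun _ : ℕ => L k) (i : ℕ)) continuous_subtype_val)
    (isOpen_discrete {l[(i : ℕ)]})

/-- The family of cylinder sets. -/
def CylFam : Set (Set (Boundary k)) := { S | ∃ l, RedL k l ∧ S = CylL k l }

theorem isBasis_CylFam : TopologicalSpace.IsTopologicalBasis (CylFam k) := by
  apply TopologicalSpace.isTopologicalBasis_of_isOpen_of_nhds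
  · rintro S ⟨l, _, rfl⟩
    exact isOpen_CylL k l
  · intro x u hx hu
    obtain ⟨V, hV, hVu⟩ := isOpen_induced_iff.mp hu
    have hxV : x.1 ∈ V := by rw [← hVu] at hx; exact hx
    obtain ⟨s, ⟨y, n, rfl⟩, hxs, hsV⟩ :=
      (PiNat.isTopologicalBasis_cylinders (fun _ : ℕ => L k)).exists_subset_of_mem_open hxV hV
    refine ⟨CylL k (List.ofFn fun i : Fin n => x.1 i),
      ⟨_, redL_ofFn k x.1 x.2 n, rfl⟩, mem_CylL_ofFn k x n, ?_⟩
    intro z hz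
    rw [← hVu]
    apply hsV
    show z.1 ∈ PiNat.cylinder y n
    rw [PiNat.mem_cylinder_iff]
    intro i hi
    have h1 : z.1 i = x.1 i := by
      have := hz i (by simpa using hi)
      rwa [List.getElem_ofFn] at this
    rw [h1]
    exact PiNat.mem_cylinder_iff.mp hxs i hi

theorem measurableSpace_eq :
    (inferInstance : MeasurableSpace (Boundary k)) =
      MeasurableSpace.generateFrom (CylFam k) :=
  BorelSpace.measurable_eq.trans (isBasis_CylFam k).borel_eq_generateFrom

theorem spanning_CylFam : IsCountablySpanning (CylFam k) :=
  ⟨fun _ => CylL k [], fun _ => ⟨[], redL_nil k, rfl⟩, by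
    rw [Set.iUnion_const, CylL_nil]⟩

/-- The family of rectangles of cylinders. -/
def RectFam : Set (Set (Boundary k × Boundary k)) :=
  Set.image2 (· ×ˢ ·) (CylFam k) (CylFam k)

theorem measurableSpace_prod_eq :
    (inferInstance : MeasurableSpace (Boundary k × Boundary k)) =
      MeasurableSpace.generateFrom (RectFam k) := by
  have h1 : (inferInstance : MeasurableSpace (Boundary k × Boundary k)) =
      @Prod.instMeasurableSpace _ _
        (MeasurableSpace.generateFrom (CylFam k))
        (MeasurableSpace.generateFrom (CylFam k)) := by
    rw [← measurableSpace_eq k]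
  exact h1.trans (generateFrom_prod_eq (spanning_CylFam k) (spanning_CylFam k))

theorem measurableSet_CylL (l : List (L k)) : MeasurableSet (CylL k l) :=
  (isOpen_CylL k l).measurableSet

theorem measurableSet_pieceS (t : Idx k) : MeasurableSet (pieceS k t) :=
  (measurableSet_CylL k _).prod (measurableSet_CylL k _)

theorem measurableSet_D2 : MeasurableSet (D2 k) := by
  have hclosed : IsClosed { p : Boundary k × Boundary k | p.1 = p.2 } :=
    isClosed_eq continuous_fst continuous_snd
  have : D2 k = { p : Boundary k × Boundary k | p.1 = p.2 }ᶜ := by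
    ext p
    simp [D2]
  rw [this]
  exact hclosed.measurableSet.compl

/-- Intersections of cylinders. -/
theorem CylL_inter_cases (l m : List (L k)) :
    CylL k l ∩ CylL k m = ∅ ∨
      (l <+: m ∧ CylL k l ∩ CylL k m = CylL k m) ∨
      (m <+: l ∧ CylL k l ∩ CylL k m = CylL k l) := by
  by_cases h1 : l <+: m
  · exact Or.inr (Or.inl ⟨h1, Set.inter_eq_right.mpr (CylL_subset_of_prefix k h1)⟩)
  by_cases h2 : m <+: l
  · exact Or.inr (Or.inr ⟨h2, Set.inter_eq_left.mpr (CylL_subset_of_prefix k h2)⟩)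
  · exact Or.inl (CylL_disjoint k h1 h2)

theorem CylL_inter_mem {la la' : List (L k)} (hla : RedL k la) (hla' : RedL k la')
    (h : (CylL k la ∩ CylL k la').Nonempty) :
    ∃ n, RedL k n ∧ CylL k la ∩ CylL k la' = CylL k n := by
  rcases CylL_inter_cases k la la' with h0 | ⟨_, h0⟩ | ⟨_, h0⟩
  · rw [h0] at h
    exact absurd h (by simp)
  · exact ⟨la', hla', h0⟩
  · exact ⟨la, hla, h0⟩

theorem isPiSystem_RectFam : IsPiSystem (RectFam k) := by
  rintro _ ⟨A, ⟨la, hla, rfl⟩, B, ⟨lb, hlb, rfl⟩, rfl⟩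
    _ ⟨A', ⟨la', hla', rfl⟩, B', ⟨lb', hlb', rfl⟩, rfl⟩ hne
  rw [Set.prod_inter_prod] at hne ⊢
  obtain ⟨hne1, hne2⟩ := Set.prod_nonempty_iff.mp hne
  obtain ⟨nA, hnA, hA⟩ := CylL_inter_mem k hla hla' hne1
  obtain ⟨nB, hnB, hB⟩ := CylL_inter_mem k hlb hlb' hne2
  exact ⟨_, ⟨nA, hnA, rfl⟩, _, ⟨nB, hnB, rfl⟩, by rw [hA, hB]⟩

end Aux6

theorem ennreal_piece_identity (x y : ℝ≥0∞) (hx0 : x ≠ 0) (hxt : x ≠ ⊤)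
    (hy0 : y ≠ 0) (hyt : y ≠ ⊤) (m p q : ℕ) :
    (y * (x * y ^ (2 * m))⁻¹) * (x * y ^ (p + q + 1))⁻¹
      = (x * y ^ (m + p))⁻¹ * (x * y ^ (m + q))⁻¹ := by
  have hmi : ∀ n : ℕ, (x * y ^ n)⁻¹ = x⁻¹ * y⁻¹ ^ n := by
    intro n
    rw [ENNReal.mul_inv (Or.inl hx0) (Or.inl hxt), ENNReal.inv_pow]
  rw [hmi, hmi, hmi, hmi]
  have hyy : y * y⁻¹ = 1 := ENNReal.mul_inv_cancel hy0 hyt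
  calc y * (x⁻¹ * y⁻¹ ^ (2 * m)) * (x⁻¹ * y⁻¹ ^ (p + q + 1))
      = (y * y⁻¹) * (x⁻¹ * y⁻¹ ^ (2 * m) * (x⁻¹ * y⁻¹ ^ (p + q))) := by
        rw [pow_succ]; ring
    _ = x⁻¹ * y⁻¹ ^ (2 * m) * (x⁻¹ * y⁻¹ ^ (p + q)) := by rw [hyy, one_mul]
    _ = x⁻¹ * y⁻¹ ^ (m + p) * (x⁻¹ * y⁻¹ ^ (m + q)) := by
        rw [show 2 * m = m + m by ring, pow_add, pow_add, pow_add, pow_add]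
        ring

theorem product_lower_bound (k : ℕ) (hk : 2 ≤ k)
    (μA : Measure (Boundary k)) [IsProbabilityMeasure μA]
    (hμA : ∀ v : F k, v ≠ 1 →
      μA (Cyl k v) = ((2 * k : ℝ≥0∞) * (2 * k - 1) ^ (wordLength k v - 1))⁻¹)
    (ηA : Measure (Boundary k × Boundary k)) (hηA : IsCurrent k ηA)
    (hηA' : ∀ x y : F k, ηA (Cyl2 k x y) = μA (Cyl k (x⁻¹ * y)))
    (E D : Set (Boundary k)) (hE : MeasurableSet E) (hD : MeasurableSet D) :
    μA E * μA D ≤ ηA ((E ×ˢ D) ∩ D2 k) := by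
  classical
  have hk1 : (1 : ℝ≥0∞) ≤ (k : ℝ≥0∞) := by exact_mod_cast Nat.one_le_cast.mpr (by omega)
  have hx0 : (2 * (k : ℝ≥0∞)) ≠ 0 :=
    mul_ne_zero two_ne_zero (by exact_mod_cast Nat.cast_ne_zero.mpr (by omega))
  have hxt : (2 * (k : ℝ≥0∞)) ≠ ⊤ := ENNReal.mul_ne_top (by simp) (ENNReal.natCast_ne_top k)
  have hY : (2 * (k : ℝ≥0∞) - 1) = ((2 * k - 1 : ℕ) : ℝ≥0∞) := by
    rw [ENNReal.natCast_sub]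
    push_cast
    rfl
  have hy0 : (2 * (k : ℝ≥0∞) - 1) ≠ 0 := by
    rw [hY]
    exact Nat.cast_ne_zero.mpr (by omega)
  have hyt : (2 * (k : ℝ≥0∞) - 1) ≠ ⊤ := ENNReal.sub_ne_top hxt
  have h2y : (2 : ℝ≥0∞) ≤ 2 * (k : ℝ≥0∞) - 1 := by
    rw [hY]
    exact_mod_cast (by omega : 2 ≤ 2 * k - 1)
  have hyx : (2 * (k : ℝ≥0∞) - 1) ≤ 2 * (k : ℝ≥0∞) := tsub_le_self
  -- measure of cylinders
  have hmuCyl : ∀ l : List (L k), RedL k l → l ≠ [] →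
      μA (CylL k l) = ((2 * (k : ℝ≥0∞)) * (2 * (k : ℝ≥0∞) - 1) ^ (l.length - 1))⁻¹ := by
    intro l hl hne
    rw [← Cyl_mk_eq_CylL k hl, hμA _ (mk_ne_one_of_redL k hl hne), wordLength_mk_of_redL k hl]
  -- measure of rectangles under the current
  have hetaRect : ∀ (v u₁ w₁ : List (L k)) (a b : L k), a ≠ b →
      RedL k (v ++ a :: u₁) → RedL k (v ++ b :: w₁) →
      ηA (CylL k (v ++ a :: u₁) ×ˢ CylL k (v ++ b :: w₁))
        = ((2 * (k : ℝ≥0∞)) * (2 * (k : ℝ≥0∞) - 1) ^ (u₁.length + w₁.length + 1))⁻¹ := by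
    intro v u₁ w₁ a b hab HU HW
    rw [← cyl2_eq k hab HU HW, hηA', mk_inv_mul k,
      Cyl_mk_eq_CylL k (redL_Z k HU HW hab),
      hmuCyl _ (redL_Z k HU HW hab) (by simp [invW]), Z_length k]
    norm_num
  -- the density of each piece
  set dd : Idx k → ℝ≥0∞ := fun t =>
    (2 * (k : ℝ≥0∞) - 1) *
      ((2 * (k : ℝ≥0∞)) * (2 * (k : ℝ≥0∞) - 1) ^ (2 * t.1.1.length))⁻¹ with hdd
  have hdd1 : ∀ t, dd t ≤ 1 := by
    intro t
    have hle : (2 * (k : ℝ≥0∞) - 1)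
        ≤ (2 * (k : ℝ≥0∞)) * (2 * (k : ℝ≥0∞) - 1) ^ (2 * t.1.1.length) := by
      calc (2 * (k : ℝ≥0∞) - 1) = (2 * (k : ℝ≥0∞) - 1) * 1 := (mul_one _).symm
        _ ≤ (2 * (k : ℝ≥0∞)) * (2 * (k : ℝ≥0∞) - 1) ^ (2 * t.1.1.length) := by
            refine mul_le_mul' hyx ?_
            calc (1 : ℝ≥0∞) = 1 ^ (2 * t.1.1.length) := (one_pow _).symm
              _ ≤ (2 * (k : ℝ≥0∞) - 1) ^ (2 * t.1.1.length) :=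
                pow_le_pow_left₀ zero_le (le_trans one_le_two h2y) _
    calc dd t ≤ (2 * (k : ℝ≥0∞) - 1) * (2 * (k : ℝ≥0∞) - 1)⁻¹ :=
        mul_le_mul_right (ENNReal.inv_le_inv.mpr hle) _
      _ = 1 := ENNReal.mul_inv_cancel hy0 hyt
  -- the key per-piece identity on rectangles
  have hkey : ∀ (v u₁ w₁ : List (L k)) (a b : L k), a ≠ b →
      RedL k (v ++ a :: u₁) → RedL k (v ++ b :: w₁) →
      (2 * (k : ℝ≥0∞) - 1) *
        ((2 * (k : ℝ≥0∞)) * (2 * (k : ℝ≥0∞) - 1) ^ (2 * v.length))⁻¹ *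
        ηA (CylL k (v ++ a :: u₁) ×ˢ CylL k (v ++ b :: w₁))
        = (μA.prod μA) (CylL k (v ++ a :: u₁) ×ˢ CylL k (v ++ b :: w₁)) := by
    intro v u₁ w₁ a b hab HU HW
    rw [hetaRect v u₁ w₁ a b hab HU HW, Measure.prod_prod,
      hmuCyl _ HU (by simp), hmuCyl _ HW (by simp),
      show (v ++ a :: u₁).length - 1 = v.length + u₁.length from by simp,
      show (v ++ b :: w₁).length - 1 = v.length + w₁.length from by simp]
    exact ennreal_piece_identity _ _ hx0 hxt hy0 hyt v.length u₁.length w₁.length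
  -- intersecting a cylinder with an extension cylinder
  have hinterC : ∀ (l : List (L k)), RedL k l → ∀ (v : List (L k)) (c : L k),
      RedL k (v ++ [c]) →
      CylL k l ∩ CylL k (v ++ [c]) = ∅ ∨
        ∃ u₂, RedL k (v ++ c :: u₂) ∧
          CylL k l ∩ CylL k (v ++ [c]) = CylL k (v ++ c :: u₂) := by
    intro l hl v c hvc
    rcases CylL_inter_cases k l (v ++ [c]) with h0 | ⟨hpre, h0⟩ | ⟨hpre, h0⟩
    · exact Or.inl h0
    · exact Or.inr ⟨[], hvc, h0⟩
    · obtain ⟨u₂, rfl⟩ := hpre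
      refine Or.inr ⟨u₂, ?_, ?_⟩
      · rw [show v ++ c :: u₂ = (v ++ [c]) ++ u₂ from by simp]
        exact hl
      · rw [h0]
        congr 1
        simp
  -- the comparison measure
  set κ : Measure (Boundary k × Boundary k) :=
    Measure.sum (fun t : Idx k => dd t • ηA.restrict (pieceS k t)) with hκ
  have hκ_apply : ∀ s : Set (Boundary k × Boundary k), MeasurableSet s →
      κ s = ∑' t, dd t * ηA (s ∩ pieceS k t) := by
    intro s hs
    rw [hκ, Measure.sum_apply _ hs]
    congr 1
    funext t
    rw [Measure.smul_apply, Measure.restrict_apply hs, smul_eq_mul]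
  have hpiece_rect : ∀ (lu lw : List (L k)), RedL k lu → RedL k lw → ∀ t : Idx k,
      dd t * ηA ((CylL k lu ×ˢ CylL k lw) ∩ pieceS k t)
        = (μA.prod μA) ((CylL k lu ×ˢ CylL k lw) ∩ pieceS k t) := by
    intro lu lw hlu hlw t
    obtain ⟨⟨v, a, b⟩, h1, h2, hab⟩ := t
    simp only [pieceS, hdd, Set.prod_inter_prod]
    rcases hinterC lu hlu v a h1 with hA | ⟨u₂, hu₂, hA⟩
    · rw [hA, Set.empty_prod, measure_empty, measure_empty, mul_zero]
    rcases hinterC lw hlw v b h2 with hB | ⟨w₂, hw₂, hB⟩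
    · rw [hB, Set.prod_empty, measure_empty, measure_empty, mul_zero]
    rw [hA, hB]
    exact hkey v u₂ w₂ a b hab hu₂ hw₂
  -- the diagonal is null for the product measure
  have hsing : ∀ z : Boundary k, μA {z} = 0 := by
    intro z
    have hb : ∀ n : ℕ, μA {z} ≤ (2 : ℝ≥0∞)⁻¹ ^ n := by
      intro n
      have hsub : {z} ⊆ CylL k (List.ofFn fun i : Fin (n + 1) => z.1 i) :=
        Set.singleton_subset_iff.mpr (mem_CylL_ofFn k z (n + 1))
      have hlen : (List.ofFn fun i : Fin (n + 1) => z.1 i).length - 1 = n := by simp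
      have hnil : (List.ofFn fun i : Fin (n + 1) => z.1 i) ≠ [] := by
        intro h
        have := congrArg List.length h
        simp at this
      calc μA {z} ≤ μA (CylL k (List.ofFn fun i : Fin (n + 1) => z.1 i)) :=
            measure_mono hsub
        _ = ((2 * (k : ℝ≥0∞)) * (2 * (k : ℝ≥0∞) - 1) ^ n)⁻¹ := by
            rw [hmuCyl _ (redL_ofFn k z.1 z.2 (n + 1)) hnil, hlen]
        _ ≤ ((2 : ℝ≥0∞) ^ n)⁻¹ := by
            refine ENNReal.inv_le_inv.mpr ?_
            calc (2 : ℝ≥0∞) ^ n ≤ (2 * (k : ℝ≥0∞) - 1) ^ n :=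
                pow_le_pow_left₀ zero_le h2y n
              _ ≤ (2 * (k : ℝ≥0∞)) * (2 * (k : ℝ≥0∞) - 1) ^ n :=
                le_mul_of_one_le_left zero_le (by
                  calc (1 : ℝ≥0∞) ≤ 2 * 1 := by norm_num
                    _ ≤ 2 * (k : ℝ≥0∞) := mul_le_mul_right hk1 2)
        _ = (2 : ℝ≥0∞)⁻¹ ^ n := ENNReal.inv_pow
    have h0 : μA {z} ≤ 0 :=
      ge_of_tendsto' (ENNReal.tendsto_pow_atTop_nhds_zero_of_lt_one
        (by rw [ENNReal.inv_lt_one]; exact ENNReal.one_lt_two)) hb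
    exact le_antisymm h0 zero_le
  have hdiag : (μA.prod μA) (D2 k)ᶜ = 0 := by
    have hset : (D2 k)ᶜ = { p : Boundary k × Boundary k | p.1 = p.2 } := by
      ext p
      simp [D2]
    have hcl : IsClosed { p : Boundary k × Boundary k | p.1 = p.2 } :=
      isClosed_eq continuous_fst continuous_snd
    rw [hset, Measure.prod_apply hcl.measurableSet]
    have hpre : ∀ z : Boundary k,
        (Prod.mk z ⁻¹' { p : Boundary k × Boundary k | p.1 = p.2 }) = {z} := by
      intro z
      ext w
      simp [eq_comm]
    simp only [hpre, hsing]
    simp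
  -- κ agrees with the product measure on rectangles
  have hrect : ∀ s ∈ RectFam k, κ s = (μA.prod μA) s := by
    rintro _ ⟨A, ⟨lu, hlu, rfl⟩, B, ⟨lw, hlw, rfl⟩, rfl⟩
    have hmeas : MeasurableSet (CylL k lu ×ˢ CylL k lw) :=
      (measurableSet_CylL k lu).prod (measurableSet_CylL k lw)
    rw [hκ_apply _ hmeas, tsum_congr (hpiece_rect lu lw hlu hlw),
      ← measure_iUnion
        (fun i j hij => ((pieceS_disjoint k) hij).mono
          Set.inter_subset_right Set.inter_subset_right)
        (fun t => hmeas.inter (measurableSet_pieceS k t)),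
      ← Set.inter_iUnion, pieceS_cover k, measure_inter_conull hdiag]
  have huniv : κ Set.univ = (μA.prod μA) Set.univ := by
    have hu : (Set.univ : Set (Boundary k × Boundary k)) = CylL k [] ×ˢ CylL k [] := by
      rw [CylL_nil, Set.univ_prod_univ]
    rw [hu]
    exact hrect _ ⟨_, ⟨[], redL_nil k, rfl⟩, _, ⟨[], redL_nil k, rfl⟩, rfl⟩
  have hfin : IsFiniteMeasure κ := by
    constructor
    rw [huniv]
    exact measure_lt_top _ _
  have hκμ : κ = μA.prod μA :=
    @MeasureTheory.ext_of_generate_finite _ _ κ (μA.prod μA) (RectFam k)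
      (measurableSpace_prod_eq k) (isPiSystem_RectFam k) hfin hrect huniv
  have hED : MeasurableSet (E ×ˢ D) := hE.prod hD
  calc μA E * μA D = (μA.prod μA) (E ×ˢ D) := (Measure.prod_prod E D).symm
    _ = κ (E ×ˢ D) := by rw [hκμ]
    _ = ∑' t, dd t * ηA ((E ×ˢ D) ∩ pieceS k t) := hκ_apply _ hED
    _ ≤ ∑' t, ηA ((E ×ˢ D) ∩ pieceS k t) :=
        ENNReal.tsum_le_tsum fun t => mul_le_of_le_one_left zero_le (hdd1 t)
    _ = ηA ((E ×ˢ D) ∩ D2 k) := by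
        rw [← measure_iUnion
          (fun i j hij => ((pieceS_disjoint k) hij).mono
            Set.inter_subset_right Set.inter_subset_right)
          (fun t => hED.inter (measurableSet_pieceS k t)),
          ← Set.inter_iUnion, pieceS_cover k]


end

end FGC
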